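/- Let 0 < μ ≤ 1, ζ > 0, ϑ ≥ μζ, 0 < θ ≤ 1, λ > 0 and t > 0, and set m = ζ Γ(ϑ) λ t^θ / Γ(μ + ϑ). Then the second factorial structure of the fractional counting process gives ∑_{n=0}^∞ n² · P(n,t) = m + m² (1 + 1/ζ) · B(μ+ϑ, μ+ϑ) / B(2μ+ϑ, ϑ); equivalently, the variance ∑_{n} n² P(n,t) − (∑_{n} n P(n,t))² equals m + m² { (1 + 1/ζ) B(μ+ϑ, μ+ϑ)/B(2μ+ϑ, ϑ) − 1 }, where B(a,b) = Γ(a)Γ(b)/Γ(a+b) is the Beta function. -/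

import Mathlib

open Real

/-- Rising factorial (Pochhammer symbol) `(ζ)_n = Γ(ζ+n)/Γ(ζ)`. -/
noncomputable def risingFactorial (ζ : ℝ) (n : ℕ) : ℝ :=
  Real.Gamma (ζ + n) / Real.Gamma ζ

/-- Probability function of the fractional counting process. -/
noncomputable def fcpP (μ ϑ ζ θ lam : ℝ) (n : ℕ) (t : ℝ) : ℝ :=
  risingFactorial ζ n * Real.Gamma ϑ * (lam * t ^ θ) ^ n / n.factorial *
    ∑' k : ℕ, risingFactorial (ζ + n) k * (-(lam * t ^ θ)) ^ k /
      (k.factorial * Real.Gamma (μ * (n + k : ℕ) + ϑ))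

/-- Beta function `B(a,b) = Γ(a)Γ(b)/Γ(a+b)`. -/
noncomputable def betaFn (a b : ℝ) : ℝ :=
  Real.Gamma a * Real.Gamma b / Real.Gamma (a + b)

section Aux

lemma rf_zero {ζ : ℝ} (hζ : 0 < ζ) : risingFactorial ζ 0 = 1 := by
  simp [risingFactorial, div_self (Real.Gamma_pos_of_pos hζ).ne']

lemma rf_succ {ζ : ℝ} (hζ : 0 < ζ) (n : ℕ) :
    risingFactorial ζ (n+1) = risingFactorial ζ n * (ζ + n) := by
  have h1 : (0:ℝ) < ζ + n := by positivity
  have h2 : ζ + ((n:ℝ)+1) = (ζ + n) + 1 := by ring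
  rw [risingFactorial, risingFactorial]
  push_cast
  rw [h2, Real.Gamma_add_one h1.ne']
  ring

lemma rf_pos {ζ : ℝ} (hζ : 0 < ζ) (n : ℕ) : 0 < risingFactorial ζ n := by
  have h1 : (0:ℝ) < ζ + n := by positivity
  exact div_pos (Real.Gamma_pos_of_pos h1) (Real.Gamma_pos_of_pos hζ)

lemma rf_add {ζ : ℝ} (hζ : 0 < ζ) (a b : ℕ) :
    risingFactorial ζ (a+b) = risingFactorial ζ a * risingFactorial (ζ + a) b := by
  have h1 : Real.Gamma ζ ≠ 0 := (Real.Gamma_pos_of_pos hζ).ne'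
  have h2 : Real.Gamma (ζ + a) ≠ 0 := (Real.Gamma_pos_of_pos (by positivity)).ne'
  rw [risingFactorial, risingFactorial, risingFactorial]
  have h3 : ζ + (a:ℝ) + (b:ℝ) = ζ + ((a:ℕ)+(b:ℕ) : ℕ) := by push_cast; ring
  field_simp
  rw [← h3]

lemma rf_le {β : ℝ} (hβ : 0 < β) (n : ℕ) :
    risingFactorial β n ≤ (β+1)^n * n.factorial := by
  induction n with
  | zero => simp [rf_zero hβ]
  | succ n ih =>
    rw [rf_succ hβ]
    have h1 : (0:ℝ) < β + n := by positivity
    have h2 : β + (n:ℝ) ≤ (β+1) * (n+1) := by nlinarith [Nat.cast_nonneg (α := ℝ) n]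
    calc risingFactorial β n * (β + n) ≤ ((β+1)^n * n.factorial) * ((β+1)*(n+1)) := by
          apply mul_le_mul ih h2 h1.le
          positivity
      _ = (β+1)^(n+1) * (n+1).factorial := by
          rw [pow_succ, Nat.factorial_succ]
          push_cast; ring

lemma my_Gamma_lb {y T : ℝ} (hy : 1 ≤ y) (hT : 1 ≤ T) :
    Real.exp (-(T+1)) * T ^ (y-1) ≤ Real.Gamma y := by
  have hy0 : 0 < y := by linarith
  have hT0 : 0 < T := by linarith
  rw [Real.Gamma_eq_integral hy0]
  have hint := Real.GammaIntegral_convergent hy0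
  have hsub : Set.Ioc T (T+1) ⊆ Set.Ioi (0:ℝ) := fun x hx => lt_of_lt_of_le hT0 hx.1.le
  have h1 : ∫ x in Set.Ioc T (T+1), Real.exp (-x) * x ^ (y-1)
      ≤ ∫ x in Set.Ioi (0:ℝ), Real.exp (-x) * x ^ (y-1) := by
    apply MeasureTheory.setIntegral_mono_set hint
    · filter_upwards [MeasureTheory.ae_restrict_mem measurableSet_Ioi] with x hx
      exact mul_nonneg (Real.exp_pos _).le (Real.rpow_nonneg (le_of_lt hx) _)
    · exact HasSubset.Subset.eventuallyLE hsub
  refine le_trans ?_ h1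
  have hvol : (MeasureTheory.volume (Set.Ioc T (T+1))).toReal = 1 := by
    simp [Real.volume_Ioc]
  calc Real.exp (-(T+1)) * T ^ (y-1)
      = (Real.exp (-(T+1)) * T ^ (y-1)) * (MeasureTheory.volume (Set.Ioc T (T+1))).toReal := by
        rw [hvol, mul_one]
    _ ≤ _ := by
        rw [← MeasureTheory.measureReal_def]
        apply MeasureTheory.setIntegral_ge_of_const_le_real measurableSet_Ioc
        · simp [Real.volume_Ioc]
        · intro x hx
          have h2 : Real.exp (-(T+1)) ≤ Real.exp (-x) := by
            apply Real.exp_le_exp.mpr; linarith [hx.2]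
          have h3 : T ^ (y-1) ≤ x ^ (y-1) :=
            Real.rpow_le_rpow hT0.le hx.1.le (by linarith)
          exact mul_le_mul h2 h3 (Real.rpow_nonneg hT0.le _) (Real.exp_pos _).le
        · exact hint.mono_set hsub

lemma summable_master {μ c β x : ℝ} (hμ : 0 < μ) (hc : 0 < c) (hβ : 0 < β) (hx : 0 ≤ x) :
    Summable (fun s : ℕ => risingFactorial β s * x^s / (s.factorial * Real.Gamma (μ*s+c))) := by
  set base : ℝ := 2*(β+1)*x + 2 with hbase
  have hbase1 : (1:ℝ) ≤ base := by nlinarith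
  set T : ℝ := base ^ (1/μ) with hTdef
  have hT1 : (1:ℝ) ≤ T := Real.one_le_rpow hbase1 (by positivity)
  have hT0 : (0:ℝ) < T := by linarith
  have hTμ : T ^ μ = base := by
    rw [hTdef, ← Real.rpow_mul (by nlinarith : (0:ℝ) ≤ base), one_div,
      inv_mul_cancel₀ hμ.ne', Real.rpow_one]
  set q : ℝ := (β+1) * x * T ^ (-μ) with hq
  have hq0 : 0 ≤ q := by
    apply mul_nonneg (by positivity) (Real.rpow_nonneg hT0.le _)
  have hq1 : q < 1 := by
    have h1 : T ^ (-μ) = 1 / base := by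
      rw [Real.rpow_neg hT0.le, hTμ, one_div]
    rw [hq, h1]
    rw [mul_one_div, div_lt_one (by nlinarith)]
    nlinarith
  set s0 : ℕ := ⌈(1-c)/μ⌉₊ with hs0
  have hyge : ∀ s : ℕ, 1 ≤ μ*(s+s0)+c := by
    intro s
    rcases le_or_gt 1 c with h | h
    · nlinarith [mul_nonneg hμ.le (by positivity : (0:ℝ) ≤ ((s:ℝ)+s0))]
    · have h2 : (1-c)/μ ≤ s0 := Nat.le_ceil _
      have h3 : (s0:ℝ) ≤ (s:ℝ) + s0 := by nlinarith [Nat.cast_nonneg (α := ℝ) s]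
      have := (div_le_iff₀ hμ).mp (h2.trans h3)
      nlinarith
  set K : ℝ := Real.exp (T+1) * T ^ (1-c) with hK
  have hK0 : 0 < K := by positivity
  rw [← summable_nat_add_iff s0]
  apply Summable.of_nonneg_of_le (g := fun s => risingFactorial β (s+s0) * x^(s+s0) /
      ((s+s0).factorial * Real.Gamma (μ*((s+s0):ℕ)+c)))
  · intro s
    have hΓ : 0 < Real.Gamma (μ*((s+s0):ℕ)+c) := Real.Gamma_pos_of_pos (by positivity)
    have := rf_pos hβ (s+s0)
    positivity
  · intro s
    set n : ℕ := s + s0 with hn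
    have hcast : ((n:ℕ):ℝ) = (s:ℝ) + (s0:ℝ) := Nat.cast_add _ _
    have hy1 : 1 ≤ μ*(n:ℝ)+c := by rw [hcast]; exact hyge s
    have hΓlb := my_Gamma_lb hy1 hT1
    have hΓ0 : 0 < Real.Gamma (μ*(n:ℝ)+c) := Real.Gamma_pos_of_pos (by linarith)
    have hexpT : (0:ℝ) < Real.exp (-(T+1)) * T ^ (μ*(n:ℝ)+c-1) := by positivity
    have hinv : 1 / Real.Gamma (μ*(n:ℝ)+c) ≤ Real.exp (T+1) * T ^ (1-(μ*(n:ℝ)+c)) := by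
      have h4 := one_div_le_one_div_of_le hexpT hΓlb
      calc 1 / Real.Gamma (μ*(n:ℝ)+c) ≤ 1 / (Real.exp (-(T+1)) * T ^ (μ*(n:ℝ)+c-1)) := h4
        _ = Real.exp (T+1) * T ^ (1-(μ*(n:ℝ)+c)) := by
            rw [one_div, mul_inv, ← Real.exp_neg, neg_neg, ← Real.rpow_neg hT0.le]
            ring_nf
    have hTsplit : T ^ (1-(μ*(n:ℝ)+c)) = T ^ (1-c) * (T ^ (-μ))^n := by
      rw [← Real.rpow_natCast (T ^ (-μ)) n, ← Real.rpow_mul hT0.le, ← Real.rpow_add hT0]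
      ring_nf
    have hrf := rf_le hβ n
    have hfac : (0:ℝ) < (n.factorial : ℝ) := by positivity
    calc risingFactorial β n * x^n / ((n.factorial : ℝ) * Real.Gamma (μ*(n:ℕ)+c))
        = (risingFactorial β n * x^n / (n.factorial : ℝ)) * (1 / Real.Gamma (μ*(n:ℝ)+c)) := by
          ring
      _ ≤ ((β+1)^n * x^n) * (Real.exp (T+1) * T ^ (1-(μ*(n:ℝ)+c))) := by
          apply mul_le_mul _ hinv (by positivity) (by positivity)
          rw [div_le_iff₀ hfac]
          calc risingFactorial β n * x^n ≤ ((β+1)^n * n.factorial) * x^n := by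
                apply mul_le_mul_of_nonneg_right hrf (by positivity)
            _ = (β+1)^n * x^n * n.factorial := by ring
      _ = K * q ^ n := by
          rw [hTsplit, hK, hq, mul_pow, mul_pow]
          ring
      _ ≤ K * q ^ s := by
          apply mul_le_mul_of_nonneg_left _ hK0.le
          rw [hn]
          exact pow_le_pow_of_le_one hq0 hq1.le (by omega)
  · exact (summable_geometric_of_lt_one hq0 hq1).mul_left K

lemma antidiag_exp (a b : ℝ) (n : ℕ) :
    ∑ p ∈ Finset.HasAntidiagonal.antidiagonal n, a^p.1 * b^p.2 / (p.1.factorial * p.2.factorial)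
      = (a+b)^n / n.factorial := by
  rw [Finset.Nat.sum_antidiagonal_eq_sum_range_succ_mk, add_pow, Finset.sum_div]
  apply Finset.sum_congr rfl
  intro i hi
  have hin : i ≤ n := Nat.lt_succ_iff.mp (Finset.mem_range.mp hi)
  have hidR : ((n.choose i : ℝ)) * i.factorial * ((n-i).factorial : ℝ) = n.factorial := by
    exact_mod_cast congrArg (Nat.cast (R := ℝ)) (Nat.choose_mul_factorial_mul_factorial hin)
  rw [div_eq_div_iff (by positivity) (by positivity), ← hidR]
  ring

lemma desc_fact (r j : ℕ) : ((r+j).descFactorial r) * j.factorial = (r+j).factorial := by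
  induction r with
  | zero => simp
  | succ r ih =>
    have h1 : r + 1 + j = (r + j) + 1 := by omega
    rw [h1, Nat.succ_descFactorial_succ, Nat.factorial_succ, mul_assoc, ih]

lemma hasSum_desc {μ ϑ ζ x : ℝ} (hμ : 0 < μ) (hζ : 0 < ζ) (hϑ : 0 < ϑ) (hx : 0 < x) (r : ℕ) :
    HasSum (fun n : ℕ => (n.descFactorial r : ℝ) *
      (risingFactorial ζ n * Real.Gamma ϑ * x^n / n.factorial *
        ∑' k : ℕ, risingFactorial (ζ + n) k * (-x)^k /
          (k.factorial * Real.Gamma (μ * (n + k : ℕ) + ϑ))))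
      (Real.Gamma ϑ * risingFactorial ζ r * x^r / Real.Gamma (μ * r + ϑ)) := by
  have hζr : 0 < ζ + r := by positivity
  set F : ℕ × ℕ → ℝ := fun p => risingFactorial (ζ + r) (p.1 + p.2) * x^p.1 * (-x)^p.2 /
      (p.1.factorial * p.2.factorial * Real.Gamma (μ * (r + p.1 + p.2 : ℕ) + ϑ)) with hF
  have hΓpos : ∀ y : ℝ, 0 ≤ y → 0 < Real.Gamma (μ * y + ϑ) := fun y hy =>
    Real.Gamma_pos_of_pos (by nlinarith)
  have hfib : ∀ (n : ℕ) (b : ℝ),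
      ∑ p ∈ Finset.HasAntidiagonal.antidiagonal n, risingFactorial (ζ + r) (p.1 + p.2) * x^p.1 * b^p.2 /
          (p.1.factorial * p.2.factorial * Real.Gamma (μ * (r + p.1 + p.2 : ℕ) + ϑ))
        = risingFactorial (ζ + r) n * (x+b)^n /
            (n.factorial * Real.Gamma (μ * (r + n : ℕ) + ϑ)) := by
    intro n b
    have step : ∀ p ∈ Finset.HasAntidiagonal.antidiagonal n,
        risingFactorial (ζ + r) (p.1 + p.2) * x^p.1 * b^p.2 /
            (p.1.factorial * p.2.factorial * Real.Gamma (μ * (r + p.1 + p.2 : ℕ) + ϑ))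
          = (risingFactorial (ζ + r) n / Real.Gamma (μ * (r + n : ℕ) + ϑ)) *
              (x^p.1 * b^p.2 / (p.1.factorial * p.2.factorial)) := by
      intro p hp
      have hp' : p.1 + p.2 = n := Finset.HasAntidiagonal.mem_antidiagonal.mp hp
      have hp'' : r + p.1 + p.2 = r + n := by omega
      rw [hp'', hp']
      ring
    rw [Finset.sum_congr rfl step, ← Finset.mul_sum, antidiag_exp]
    have hΓ : (0:ℝ) < Real.Gamma (μ * (r + n : ℕ) + ϑ) := hΓpos _ (Nat.cast_nonneg _)
    field_simp
  have habsF : ∀ p : ℕ × ℕ, |F p| = risingFactorial (ζ + r) (p.1 + p.2) * x^p.1 * x^p.2 /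
      (p.1.factorial * p.2.factorial * Real.Gamma (μ * (r + p.1 + p.2 : ℕ) + ϑ)) := by
    intro p
    rw [hF]
    dsimp only
    have h1 : (0:ℝ) < (p.1.factorial : ℝ) * p.2.factorial *
        Real.Gamma (μ * (r + p.1 + p.2 : ℕ) + ϑ) := by
      have := hΓpos ((r + p.1 + p.2 : ℕ) : ℝ) (Nat.cast_nonneg _)
      positivity
    rw [abs_div, abs_mul, abs_mul, abs_pow, abs_pow, abs_neg,
      abs_of_pos hx, abs_of_pos (rf_pos hζr _), abs_of_pos h1]
  set e := Finset.HasAntidiagonal.sigmaAntidiagonalEquivProd (A := ℕ) with he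
  have habsSigma : Summable (fun σ : Σ n : ℕ, Finset.HasAntidiagonal.antidiagonal n => |F (e σ)|) := by
    apply (summable_sigma_of_nonneg (fun _ => abs_nonneg _)).mpr
    constructor
    · intro n; exact (hasSum_fintype _).summable
    · have hrw : (fun n : ℕ => ∑' p : Finset.HasAntidiagonal.antidiagonal n, |F (e ⟨n, p⟩)|)
          = fun n : ℕ => risingFactorial (ζ + r) n * (2*x)^n /
              (n.factorial * Real.Gamma (μ * n + (μ * r + ϑ))) := by
        funext n
        rw [tsum_fintype]
        calc (∑ p : Finset.HasAntidiagonal.antidiagonal n, |F (e ⟨n, p⟩)|)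
            = ∑ p ∈ Finset.HasAntidiagonal.antidiagonal n, |F p| := by
              rw [← Finset.sum_finset_coe (f := fun p => |F p|)]
              rfl
          _ = risingFactorial (ζ + r) n * (x+x)^n /
              (n.factorial * Real.Gamma (μ * (r + n : ℕ) + ϑ)) := by
              rw [Finset.sum_congr rfl (fun p hp => habsF p), hfib]
          _ = _ := by
              have hcc : μ * ((r + n : ℕ) : ℝ) + ϑ = μ * n + (μ * r + ϑ) := by push_cast; ring
              rw [hcc]
              ring_nf
      rw [hrw]
      exact summable_master hμ (by positivity) hζr (by positivity)
  have hFe : Summable (fun σ : Σ n : ℕ, Finset.HasAntidiagonal.antidiagonal n => F (e σ)) :=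
    Summable.of_abs habsSigma
  have hFsum : Summable F := e.summable_iff.mp hFe
  have htsumF : ∑' p, F p = 1 / Real.Gamma (μ * r + ϑ) := by
    rw [← e.tsum_eq F, Summable.tsum_sigma' (fun n => (hasSum_fintype _).summable) hFe]
    have hrwn : ∀ n : ℕ, ∑' p : Finset.HasAntidiagonal.antidiagonal n, F (e ⟨n, p⟩)
        = risingFactorial (ζ + r) n * (x + -x)^n /
            (n.factorial * Real.Gamma (μ * (r + n : ℕ) + ϑ)) := by
      intro n
      rw [tsum_fintype]
      calc (∑ p : Finset.HasAntidiagonal.antidiagonal n, F (e ⟨n, p⟩))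
          = ∑ p ∈ Finset.HasAntidiagonal.antidiagonal n, F p := by
            rw [← Finset.sum_finset_coe (f := fun p => F p)]
            rfl
        _ = _ := hfib n (-x)
    rw [tsum_congr hrwn]
    rw [tsum_eq_single 0 ?_]
    · simp [rf_zero hζr]
    · intro n hn
      rw [add_neg_cancel, zero_pow hn]
      simp
  have hslice : ∀ j : ℕ, HasSum (fun k => F (j,k)) (∑' k, F (j,k)) :=
    fun j => (hFsum.prod_factor j).hasSum
  have hG : HasSum (fun j : ℕ => ∑' k, F (j,k)) (1 / Real.Gamma (μ * r + ϑ)) := by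
    have h := HasSum.prod_fiberwise hFsum.hasSum hslice
    rwa [htsumF] at h
  set C : ℝ := Real.Gamma ϑ * risingFactorial ζ r * x^r with hC
  have hCG : HasSum (fun j : ℕ => C * ∑' k, F (j,k))
      (C * (1 / Real.Gamma (μ * r + ϑ))) := hG.mul_left C
  have hpt : ∀ j : ℕ, C * ∑' k, F (j,k)
      = ((j+r).descFactorial r : ℝ) *
        (risingFactorial ζ (j+r) * Real.Gamma ϑ * x^(j+r) / (j+r).factorial *
          ∑' k : ℕ, risingFactorial (ζ + ((j+r : ℕ) : ℝ)) k * (-x)^k /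
            (k.factorial * Real.Gamma (μ * ((j+r) + k : ℕ) + ϑ))) := by
    intro j
    rw [Nat.add_comm j r]
    have hFjk : ∀ k : ℕ, F (j,k) = (risingFactorial (ζ + r) j * x^j / j.factorial) *
        (risingFactorial (ζ + ((r+j : ℕ):ℝ)) k * (-x)^k /
          (k.factorial * Real.Gamma (μ * ((r+j) + k : ℕ) + ϑ))) := by
      intro k
      rw [hF]
      dsimp only
      rw [rf_add (by positivity : (0:ℝ) < ζ + r) j k]
      push_cast
      ring
    rw [tsum_congr hFjk, tsum_mul_left]
    have hdf : (((r+j).descFactorial r : ℕ) : ℝ) * (j.factorial : ℝ)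
        = ((r+j).factorial : ℝ) := by exact_mod_cast congrArg (Nat.cast (R := ℝ)) (desc_fact r j)
    have hcoef : C * (risingFactorial (ζ + r) j * x^j / j.factorial)
        = ((r+j).descFactorial r : ℝ) *
          (risingFactorial ζ (r+j) * Real.Gamma ϑ * x^(r+j) / (r+j).factorial) := by
      rw [hC, rf_add hζ r j, pow_add]
      have h1 : ((j.factorial : ℕ) : ℝ) ≠ 0 := by positivity
      have h2 : (((r+j).factorial : ℕ) : ℝ) ≠ 0 := by positivity
      field_simp
      rw [← hdf]
      ring
    rw [← mul_assoc, hcoef, mul_assoc]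
  have hshift : HasSum (fun j : ℕ => ((j+r).descFactorial r : ℝ) *
      (risingFactorial ζ (j+r) * Real.Gamma ϑ * x^(j+r) / (j+r).factorial *
        ∑' k : ℕ, risingFactorial (ζ + ((j+r : ℕ) : ℝ)) k * (-x)^k /
          (k.factorial * Real.Gamma (μ * ((j+r) + k : ℕ) + ϑ))))
      (C * (1 / Real.Gamma (μ * r + ϑ))) := by
    have heq : (fun j : ℕ => ((j+r).descFactorial r : ℝ) *
      (risingFactorial ζ (j+r) * Real.Gamma ϑ * x^(j+r) / (j+r).factorial *
        ∑' k : ℕ, risingFactorial (ζ + ((j+r : ℕ) : ℝ)) k * (-x)^k /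
          (k.factorial * Real.Gamma (μ * ((j+r) + k : ℕ) + ϑ))))
        = (fun j : ℕ => C * ∑' k, F (j,k)) := funext (fun j => (hpt j).symm)
    rw [heq]
    exact hCG
  refine (hasSum_nat_add_iff' r).mp ?_
  have hzero : ∑ i ∈ Finset.range r, (fun n : ℕ => (n.descFactorial r : ℝ) *
      (risingFactorial ζ n * Real.Gamma ϑ * x^n / n.factorial *
        ∑' k : ℕ, risingFactorial (ζ + n) k * (-x)^k /
          (k.factorial * Real.Gamma (μ * (n + k : ℕ) + ϑ)))) i = 0 := by
    apply Finset.sum_eq_zero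
    intro i hi
    have : i < r := Finset.mem_range.mp hi
    simp [Nat.descFactorial_eq_zero_iff_lt.mpr this]
  rw [hzero, sub_zero]
  have hval : Real.Gamma ϑ * risingFactorial ζ r * x^r / Real.Gamma (μ * r + ϑ)
      = C * (1 / Real.Gamma (μ * r + ϑ)) := by rw [hC]; ring
  rw [hval]
  exact hshift

lemma desc_sq (n : ℕ) : ((n.descFactorial 2 : ℕ) : ℝ) + ((n.descFactorial 1 : ℕ) : ℝ)
    = (n:ℝ)^2 := by
  cases n with
  | zero => simp
  | succ m =>
    rw [Nat.succ_descFactorial_succ, Nat.descFactorial_one, Nat.descFactorial_one]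
    push_cast
    ring

lemma rf_one {ζ : ℝ} (hζ : 0 < ζ) : risingFactorial ζ 1 = ζ := by
  have := rf_succ hζ 0
  rw [rf_zero hζ] at this
  simpa using this

lemma rf_two {ζ : ℝ} (hζ : 0 < ζ) : risingFactorial ζ 2 = ζ * (ζ + 1) := by
  have := rf_succ hζ 1
  rw [rf_one hζ] at this
  rw [show (2:ℕ) = 1 + 1 from rfl, this]
  push_cast
  ring

end Aux

/-- Second moment and variance of the fractional counting process. With
`m = ζ Γ(ϑ) λ t^θ / Γ(μ+ϑ)` one has
`∑_n n² P(n,t) = m + m² (1+1/ζ) B(μ+ϑ,μ+ϑ)/B(2μ+ϑ,ϑ)`, and equivalently the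
variance equals `m + m² {(1+1/ζ) B(μ+ϑ,μ+ϑ)/B(2μ+ϑ,ϑ) − 1}`. -/
theorem fcp_second_moment_and_variance (μ ϑ ζ θ lam t : ℝ) (hμ : 0 < μ) (hμ1 : μ ≤ 1)
    (hζ : 0 < ζ) (hϑ : μ * ζ ≤ ϑ) (hθ : 0 < θ) (hθ1 : θ ≤ 1) (hlam : 0 < lam) (ht : 0 < t)
    (m : ℝ) (hm : m = ζ * Real.Gamma ϑ * lam * t ^ θ / Real.Gamma (μ + ϑ)) :
    (∑' n : ℕ, (n : ℝ) ^ 2 * fcpP μ ϑ ζ θ lam n t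
      = m + m ^ 2 * (1 + 1 / ζ) * (betaFn (μ + ϑ) (μ + ϑ) / betaFn (2 * μ + ϑ) ϑ)) ∧
    ((∑' n : ℕ, (n : ℝ) ^ 2 * fcpP μ ϑ ζ θ lam n t)
        - (∑' n : ℕ, (n : ℝ) * fcpP μ ϑ ζ θ lam n t) ^ 2
      = m + m ^ 2 * ((1 + 1 / ζ) * (betaFn (μ + ϑ) (μ + ϑ) / betaFn (2 * μ + ϑ) ϑ) - 1)) := by
  have hϑ0 : 0 < ϑ := lt_of_lt_of_le (mul_pos hμ hζ) hϑ
  have hx : 0 < lam * t ^ θ := mul_pos hlam (Real.rpow_pos_of_pos ht θ)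
  have key : ∀ r : ℕ, HasSum (fun n : ℕ => (n.descFactorial r : ℝ) * fcpP μ ϑ ζ θ lam n t)
      (Real.Gamma ϑ * risingFactorial ζ r * (lam * t ^ θ)^r / Real.Gamma (μ * r + ϑ)) := by
    intro r
    have h := hasSum_desc (x := lam * t ^ θ) hμ hζ hϑ0 hx r
    simpa only [fcpP] using h
  -- first moment
  have hM1 : HasSum (fun n : ℕ => (n : ℝ) * fcpP μ ϑ ζ θ lam n t) m := by
    have h := key 1
    have he1 : (fun n : ℕ => (n.descFactorial 1 : ℝ) * fcpP μ ϑ ζ θ lam n t)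
        = fun n : ℕ => (n : ℝ) * fcpP μ ϑ ζ θ lam n t := by
      funext n; rw [Nat.descFactorial_one]
    have hv1 : Real.Gamma ϑ * risingFactorial ζ 1 * (lam * t ^ θ)^1 / Real.Gamma (μ * (1:ℕ) + ϑ)
        = m := by
      rw [rf_one hζ, hm]
      norm_num
      ring
    rw [he1, hv1] at h
    exact h
  -- second factorial moment
  have hM2 := key 2
  have hv2 : Real.Gamma ϑ * risingFactorial ζ 2 * (lam * t ^ θ)^2 / Real.Gamma (μ * (2:ℕ) + ϑ)
      = Real.Gamma ϑ * (ζ * (ζ+1)) * (lam * t ^ θ)^2 / Real.Gamma (2 * μ + ϑ) := by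
    rw [rf_two hζ]
    norm_num
    rw [show μ * 2 + ϑ = 2 * μ + ϑ by ring]
  rw [hv2] at hM2
  -- second moment
  have hM2' : HasSum (fun n : ℕ => (n : ℝ)^2 * fcpP μ ϑ ζ θ lam n t)
      (Real.Gamma ϑ * (ζ * (ζ+1)) * (lam * t ^ θ)^2 / Real.Gamma (2 * μ + ϑ) + m) := by
    have h := hM2.add hM1
    have he : (fun n : ℕ => (n.descFactorial 2 : ℝ) * fcpP μ ϑ ζ θ lam n t
        + (n : ℝ) * fcpP μ ϑ ζ θ lam n t)
        = fun n : ℕ => (n : ℝ)^2 * fcpP μ ϑ ζ θ lam n t := by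
      funext n
      rw [← add_mul]
      congr 1
      have := desc_sq n
      rw [Nat.descFactorial_one] at this
      exact this
    rwa [he] at h
  have hfirst := hM1.tsum_eq
  have hsecond := hM2'.tsum_eq
  -- Gamma positivity facts
  have hG1 : Real.Gamma (μ + ϑ) ≠ 0 := (Real.Gamma_pos_of_pos (by linarith)).ne'
  have hG2 : Real.Gamma (2*μ + ϑ) ≠ 0 := (Real.Gamma_pos_of_pos (by linarith)).ne'
  have hG3 : Real.Gamma ϑ ≠ 0 := (Real.Gamma_pos_of_pos hϑ0).ne'
  have hG4 : Real.Gamma (2*μ + ϑ + ϑ) ≠ 0 := (Real.Gamma_pos_of_pos (by linarith)).ne'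
  have hbeta : betaFn (μ + ϑ) (μ + ϑ) / betaFn (2 * μ + ϑ) ϑ
      = Real.Gamma (μ+ϑ) * Real.Gamma (μ+ϑ) / (Real.Gamma (2*μ+ϑ) * Real.Gamma ϑ) := by
    rw [betaFn, betaFn, show (μ+ϑ)+(μ+ϑ) = 2*μ+ϑ+ϑ by ring]
    field_simp
  have hmain : ∑' n : ℕ, (n : ℝ) ^ 2 * fcpP μ ϑ ζ θ lam n t
      = m + m ^ 2 * (1 + 1 / ζ) * (betaFn (μ + ϑ) (μ + ϑ) / betaFn (2 * μ + ϑ) ϑ) := by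
    rw [hsecond, hbeta, hm]
    field_simp
    ring
  refine ⟨hmain, ?_⟩
  rw [hmain, hfirst, hm]
  rw [hbeta]
  field_simp
  ring
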